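/- Let 0<q<p be coprime with p/q=[a_1,...,a_n], a_i≥2. Let A be the associated tridiagonal matrix (diagonal -a_i, off-diagonals 1), w=(a_1-2,...,a_n-2)^T, and u=(1,0,...,0)^T. Then u^T A^{-1} w = (q+1-p)/p. -/

import Mathlib

/-- Hirzebruch–Jung (negative-regular) continued fraction
`[a₁,...,aₙ] = a₁ - 1/(a₂ - 1/(⋯ - 1/aₙ))`. -/
def hjCF : List ℚ → ℚ
  | [] => 0
  | [a] => a
  | a :: b :: l => a - 1 / hjCF (b :: l)

/-- The tridiagonal matrix with diagonal `-a₁,...,-aₙ` and off-diagonal entries `1`. -/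
def tridiag {n : ℕ} (a : Fin n → ℤ) : Matrix (Fin n) (Fin n) ℚ :=
  Matrix.of fun i j =>
    if i = j then -(a i : ℚ)
    else if (i : ℕ) + 1 = (j : ℕ) ∨ (j : ℕ) + 1 = (i : ℕ) then 1 else 0

def cfP : List ℚ → ℚ × ℚ
  | [] => (1, 0)
  | a :: l => (a * (cfP l).1 - (cfP l).2, (cfP l).1)

lemma hjCF_cons (a : ℚ) (l : List ℚ) : hjCF (a :: l) = a - 1 / hjCF l := by
  cases l <;> simp [hjCF]

lemma cfP_spec (l : List ℚ) (h : ∀ x ∈ l, 2 ≤ x) :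
    hjCF l = (cfP l).1 / (cfP l).2 ∧ (cfP l).2 < (cfP l).1 ∧ 0 ≤ (cfP l).2 := by
  induction l with
  | nil => simp [hjCF, cfP]
  | cons a l ih =>
    obtain ⟨h1, h2, h3⟩ := ih (fun x hx => h x (List.mem_cons_of_mem _ hx))
    have ha : 2 ≤ a := h a List.mem_cons_self
    have hN : 0 < (cfP l).1 := lt_of_le_of_lt h3 h2
    refine ⟨?_, ?_, le_of_lt hN⟩
    · rw [hjCF_cons, h1, one_div_div]
      show _ = (a * (cfP l).1 - (cfP l).2) / (cfP l).1
      field_simp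
    · show (cfP l).1 < a * (cfP l).1 - (cfP l).2
      nlinarith


def seqS (c : ℕ → ℤ) : ℕ → ℤ
  | 0 => 0
  | 1 => 1
  | (k+2) => c k * seqS c (k+1) - seqS c k

def seqRrev (c : ℕ → ℤ) (n : ℕ) : ℕ → ℤ
  | 0 => 0
  | 1 => 1
  | (j+2) => c (n - 1 - j) * seqRrev c n (j+1) - seqRrev c n j

def seqR (c : ℕ → ℤ) (n k : ℕ) : ℤ := seqRrev c n (n + 1 - k)

lemma seqR_top (c : ℕ → ℤ) (n : ℕ) : seqR c n (n+1) = 0 := by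
  simp [seqR, seqRrev]

lemma seqR_n (c : ℕ → ℤ) (n : ℕ) : seqR c n n = 1 := by
  have : n + 1 - n = 1 := by omega
  simp [seqR, this, seqRrev]

lemma seqR_rec (c : ℕ → ℤ) (n : ℕ) {k : ℕ} (hk : k < n) :
    seqR c n k = c k * seqR c n (k+1) - seqR c n (k+2) := by
  have h1 : n + 1 - k = (n - 1 - k) + 2 := by omega
  have h2 : n + 1 - (k+1) = (n - 1 - k) + 1 := by omega
  have h3 : n + 1 - (k+2) = n - 1 - k := by omega
  have h4 : n - 1 - (n - 1 - k) = k := by omega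
  rw [seqR, seqR, seqR, h1, h2, h3, seqRrev, h4]

lemma seqRrev_mono (c : ℕ → ℤ) (n : ℕ) (hc : ∀ m < n, 2 ≤ c m) :
    ∀ j ≤ n, 0 ≤ seqRrev c n j ∧ seqRrev c n j < seqRrev c n (j+1) := by
  intro j
  induction j with
  | zero => intro _; simp [seqRrev]
  | succ j ih =>
    intro hj
    obtain ⟨h0, h1⟩ := ih (by omega)
    refine ⟨by omega, ?_⟩
    have hcj : 2 ≤ c (n - 1 - j) := hc _ (by omega)
    show seqRrev c n (j+1) < c (n - 1 - j) * seqRrev c n (j+1) - seqRrev c n j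
    nlinarith

lemma seqR_gcd (c : ℕ → ℤ) (n : ℕ) : IsCoprime (seqR c n 0) (seqR c n 1) := by
  suffices h : ∀ j ≤ n, IsCoprime (seqRrev c n (j+1)) (seqRrev c n j) by
    have := h n le_rfl
    have e0 : seqR c n 0 = seqRrev c n (n+1) := by simp [seqR]
    have e1 : seqR c n 1 = seqRrev c n n := by simp [seqR]
    rw [e0, e1]; exact this
  intro j
  induction j with
  | zero => intro _; simp [seqRrev, isCoprime_one_left]
  | succ j ih =>
    intro hj
    have h := ih (by omega)
    show IsCoprime (c (n-1-j) * seqRrev c n (j+1) - seqRrev c n j) (seqRrev c n (j+1))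
    have : c (n-1-j) * seqRrev c n (j+1) - seqRrev c n j
        = -seqRrev c n j + seqRrev c n (j+1) * c (n-1-j) := by ring
    rw [this]
    exact (h.symm.neg_left).add_mul_left_left _

lemma tconst (c : ℕ → ℤ) (n : ℕ) :
    ∀ k ≤ n, seqR c n k * seqS c (k+1) - seqR c n (k+1) * seqS c k = seqR c n 0 := by
  intro k
  induction k with
  | zero => intro _; simp [seqS]
  | succ k ih =>
    intro hk
    have h := ih (by omega)
    have hr := seqR_rec c n (show k < n by omega)
    have hs : seqS c (k+2) = c k * seqS c (k+1) - seqS c k := by rfl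
    rw [← h]
    rw [hs]
    linear_combination (-(seqS c (k+1))) * hr

lemma seqS_top (c : ℕ → ℤ) (n : ℕ) : seqS c (n+1) = seqR c n 0 := by
  have := tconst c n n le_rfl
  rw [seqR_n, seqR_top] at this
  linarith

lemma cfP_ofFn (c : ℕ → ℤ) (n : ℕ) : ∀ j ≤ n,
    cfP (List.ofFn fun i : Fin j => ((c (n - j + ↑i) : ℤ) : ℚ))
      = ((seqR c n (n-j) : ℚ), (seqR c n (n-j+1) : ℚ)) := by
  intro j
  induction j with
  | zero =>
    intro _
    simp only [Nat.sub_zero, List.ofFn_zero]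
    rw [seqR_n, seqR_top]
    simp [cfP]
  | succ j ih =>
    intro hj
    have IH := ih (by omega)
    rw [List.ofFn_succ]
    have etail : (fun i : Fin j => ((c (n - (j+1) + ↑i.succ) : ℤ) : ℚ))
        = fun i : Fin j => ((c (n - j + ↑i) : ℤ) : ℚ) := by
      funext i
      have : n - (j+1) + ↑i.succ = n - j + ↑i := by
        have := i.isLt
        simp only [Fin.val_succ]
        omega
      rw [this]
    rw [etail]
    show ((c (n - (j+1) + ↑(0 : Fin (j+1))) : ℚ) * (cfP _).1 - (cfP _).2, (cfP _).1) = _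
    rw [IH]
    have hrec := seqR_rec c n (show n - (j+1) < n by omega)
    have e1 : n - (j+1) + 1 = n - j := by omega
    have e2 : n - (j+1) + 2 = n - j + 1 := by omega
    have e0 : n - (j+1) + ↑(0 : Fin (j+1)) = n - (j+1) := by simp
    rw [e1, e2] at hrec
    rw [e0, e1]
    refine Prod.ext ?_ rfl
    push_cast [hrec]
    ring

lemma sum_ite_range (n c : ℕ) (v : ℚ) :
    ∑ m ∈ Finset.range n, (if m = c then v else 0) = if c < n then v else 0 := by
  rw [Finset.sum_ite_eq' (Finset.range n) c (fun _ => v)]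
  simp [Finset.mem_range]

lemma rowsum {n : ℕ} (a : Fin n → ℤ) (i : Fin n) (z : ℕ → ℚ)
    (h0 : z 0 = 0) (hn1 : z (n+1) = 0) :
    ∑ j, tridiag a i j * z (↑j+1) = z ↑i - (a i : ℚ) * z (↑i+1) + z (↑i+2) := by
  have key : ∀ j : Fin n, tridiag a i j * z (↑j+1)
      = (if (j:ℕ) = ↑i then -(a i : ℚ) * z (↑i+1) else 0)
      + ((if (j:ℕ) = ↑i+1 then z (↑i+2) else 0)
      + (if (j:ℕ)+1 = ↑i then z ↑i else 0)) := by
    intro j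
    simp only [tridiag, Matrix.of_apply, Fin.ext_iff]
    split_ifs with h1 h2 h3 h4 h5 h6 h7 h8 h9 <;>
      first
        | omega
        | (rw [show (↑j+1 : ℕ) = ↑i + 2 by omega]; ring)
        | (rw [show (↑j+1 : ℕ) = ↑i + 1 by omega]; ring)
        | (rw [show (↑j+1 : ℕ) = ↑i by omega]; ring)
        | ring
  rw [Finset.sum_congr rfl (fun j _ => key j), Finset.sum_add_distrib]
  have r1 : ∑ j : Fin n, (if (j:ℕ) = ↑i then -(a i : ℚ) * z (↑i+1) else 0)
      = -(a i : ℚ) * z (↑i+1) := by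
    rw [Fin.sum_univ_eq_sum_range (fun m => if m = ↑i then -(a i : ℚ) * z (↑i+1) else 0) n,
      sum_ite_range, if_pos i.isLt]
  have r2 : ∑ j : Fin n, ((if (j:ℕ) = ↑i+1 then z (↑i+2) else 0)
      + (if (j:ℕ)+1 = ↑i then z ↑i else 0)) = z (↑i+2) + z ↑i := by
    rw [Finset.sum_add_distrib]
    have r2a : ∑ j : Fin n, (if (j:ℕ) = ↑i+1 then z (↑i+2) else 0) = z (↑i+2) := by
      rw [Fin.sum_univ_eq_sum_range (fun m => if m = ↑i+1 then z (↑i+2) else 0) n,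
        sum_ite_range]
      split_ifs with h
      · rfl
      · rw [show (↑i+2 : ℕ) = n + 1 by omega, hn1]
    have r2b : ∑ j : Fin n, (if (j:ℕ)+1 = ↑i then z ↑i else 0) = z ↑i := by
      rw [Fin.sum_univ_eq_sum_range (fun m => if m+1 = ↑i then z ↑i else 0) n]
      rcases h : (i : ℕ) with _ | ci
      · simp [h, h0]
      · have e : ∀ m, (if m+1 = ci+1 then z (ci+1) else 0)
            = (if m = ci then z (ci+1) else 0) := by
          intro m; split_ifs <;> first | rfl | omega
        rw [Finset.sum_congr rfl (fun m _ => e m), sum_ite_range,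
          if_pos (show ci < n by have := i.isLt; omega)]
    rw [r2a, r2b]
  rw [r1, r2]
  ring

def yF (c : ℕ → ℤ) (n k : ℕ) : ℚ :=
  -1 + ((seqR c n k : ℚ) + (seqS c k : ℚ)) / (seqR c n 0 : ℚ)

lemma yF_zero (c : ℕ → ℤ) (n : ℕ) (hP : ((seqR c n 0 : ℤ) : ℚ) ≠ 0) : yF c n 0 = 0 := by
  rw [yF]
  show -1 + ((seqR c n 0 : ℚ) + ((0:ℤ):ℚ)) / (seqR c n 0 : ℚ) = 0
  push_cast
  field_simp
  ring

lemma yF_top (c : ℕ → ℤ) (n : ℕ) (hP : ((seqR c n 0 : ℤ) : ℚ) ≠ 0) : yF c n (n+1) = 0 := by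
  rw [yF, seqR_top c n, seqS_top c n]
  push_cast
  field_simp
  ring

lemma yF_id (c : ℕ → ℤ) (n : ℕ) (hP : ((seqR c n 0 : ℤ) : ℚ) ≠ 0) {m : ℕ} (hm : m < n) :
    yF c n m - (c m : ℚ) * yF c n (m+1) + yF c n (m+2) = (c m : ℚ) - 2 := by
  have hrQ : ((seqR c n m : ℚ)) = (c m : ℚ) * (seqR c n (m+1) : ℚ) - (seqR c n (m+2) : ℚ) := by
    exact_mod_cast congrArg (fun t : ℤ => (t : ℚ)) (seqR_rec c n hm)
  have hsQ : ((seqS c (m+2) : ℚ)) = (c m : ℚ) * (seqS c (m+1) : ℚ) - (seqS c m : ℚ) := by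
    have : seqS c (m+2) = c m * seqS c (m+1) - seqS c m := rfl
    exact_mod_cast congrArg (fun t : ℤ => (t : ℚ)) this
  rw [yF, yF, yF, hrQ, hsQ]
  field_simp
  ring

def betaF (c : ℕ → ℤ) (n j k : ℕ) : ℚ :=
  -((seqS c (min k (j+1)) : ℚ) * (seqR c n (max k (j+1)) : ℚ)) / (seqR c n 0 : ℚ)

lemma betaF_zero (c : ℕ → ℤ) (n j : ℕ) : betaF c n j 0 = 0 := by
  rw [betaF]
  have : min 0 (j+1) = 0 := by omega
  rw [this]
  show -(((0:ℤ):ℚ) * _) / _ = 0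
  simp

lemma betaF_top (c : ℕ → ℤ) (n j : ℕ) (hj : j < n) : betaF c n j (n+1) = 0 := by
  rw [betaF]
  have : max (n+1) (j+1) = n+1 := by omega
  rw [this, seqR_top c n]
  simp

lemma betaF_id (c : ℕ → ℤ) (n j : ℕ) (hj : j < n) (hP : ((seqR c n 0 : ℤ) : ℚ) ≠ 0)
    {m : ℕ} (hm : m < n) :
    betaF c n j m - (c m : ℚ) * betaF c n j (m+1) + betaF c n j (m+2)
      = if m = j then 1 else 0 := by
  have hsQ : ∀ k, ((seqS c (k+2) : ℚ)) = (c k : ℚ) * (seqS c (k+1) : ℚ) - (seqS c k : ℚ) := by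
    intro k
    have : seqS c (k+2) = c k * seqS c (k+1) - seqS c k := rfl
    exact_mod_cast congrArg (fun t : ℤ => (t : ℚ)) this
  rcases lt_trichotomy m j with h | h | h
  · -- m < j : min picks the index, max = j+1
    rw [if_neg (by omega), betaF, betaF, betaF,
      show min m (j+1) = m by omega, show min (m+1) (j+1) = m+1 by omega,
      show min (m+2) (j+1) = m+2 by omega,
      show max m (j+1) = j+1 by omega, show max (m+1) (j+1) = j+1 by omega,
      show max (m+2) (j+1) = j+1 by omega, hsQ m]
    field_simp
    ring
  · -- m = j
    subst h
    rw [if_pos rfl, betaF, betaF, betaF,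
      show min m (m+1) = m by omega, show min (m+1) (m+1) = m+1 by omega,
      show min (m+2) (m+1) = m+1 by omega,
      show max m (m+1) = m+1 by omega, show max (m+1) (m+1) = m+1 by omega,
      show max (m+2) (m+1) = m+2 by omega]
    have hT := tconst c n (m+1) (by omega)
    have hTQ : (seqR c n (m+1) : ℚ) * (seqS c (m+2) : ℚ)
        - (seqR c n (m+2) : ℚ) * (seqS c (m+1) : ℚ) = (seqR c n 0 : ℚ) := by
      exact_mod_cast congrArg (fun t : ℤ => (t : ℚ)) hT
    rw [hsQ m] at hTQ
    field_simp
    linear_combination hTQ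
  · -- m > j
    have hrQ : ((seqR c n m : ℚ)) = (c m : ℚ) * (seqR c n (m+1) : ℚ) - (seqR c n (m+2) : ℚ) := by
      exact_mod_cast congrArg (fun t : ℤ => (t : ℚ)) (seqR_rec c n hm)
    rw [if_neg (by omega), betaF, betaF, betaF,
      show min m (j+1) = j+1 by omega, show min (m+1) (j+1) = j+1 by omega,
      show min (m+2) (j+1) = j+1 by omega,
      show max m (j+1) = m by omega, show max (m+1) (j+1) = m+1 by omega,
      show max (m+2) (j+1) = m+2 by omega, hrQ]
    field_simp
    ring
theorem uT_inv_w (p q : ℤ) (hq : 0 < q) (hqp : q < p) (hcop : Int.gcd p q = 1)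
    (n : ℕ) (hn : 0 < n) (a : Fin n → ℤ) (ha : ∀ i, 2 ≤ a i)
    (hhj : hjCF (List.ofFn fun i => ((a i : ℚ))) = (p : ℚ) / q) :
    ((tridiag a)⁻¹.mulVec (fun i => (a i : ℚ) - 2)) ⟨0, hn⟩
      = ((q : ℚ) + 1 - p) / p := by
  classical
  set c : ℕ → ℤ := fun m => if h : m < n then a ⟨m, h⟩ else 2 with hc_def
  have hca : ∀ i : Fin n, c ↑i = a i := by
    intro i; simp only [hc_def, i.isLt, dif_pos, Fin.eta]
  have hc2 : ∀ m < n, 2 ≤ c m := by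
    intro m hm; simp only [hc_def, dif_pos hm]; exact ha ⟨m, hm⟩
  have mono := seqRrev_mono c n hc2
  have hr0pos : 0 < seqR c n 0 := by
    have h1 := mono n le_rfl
    have e : seqR c n 0 = seqRrev c n (n+1) := by simp [seqR]
    omega
  have hr1pos : 0 < seqR c n 1 := by
    have h2 := mono (n-1) (by omega)
    have e1 : n - 1 + 1 = n := by omega
    rw [e1] at h2
    have e : seqR c n 1 = seqRrev c n n := by simp [seqR]
    omega
  -- identify p = seqR c n 0, q = seqR c n 1
  have hcf := cfP_ofFn c n n le_rfl
  simp only [Nat.sub_self] at hcf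
  have hlist : (List.ofFn fun i : Fin n => ((c (0 + ↑i) : ℤ) : ℚ))
      = List.ofFn fun i : Fin n => ((a i : ℚ)) := by
    apply congrArg
    funext i
    rw [show 0 + (i:ℕ) = ↑i from by omega, hca i]
  rw [hlist] at hcf
  obtain ⟨hval, -, -⟩ := cfP_spec (List.ofFn fun i : Fin n => ((a i : ℚ)))
    (by
      intro x hx
      rw [List.mem_ofFn] at hx
      obtain ⟨i, hi⟩ := hx
      rw [← hi]
      show (2:ℚ) ≤ ((a i : ℤ) : ℚ)
      exact_mod_cast ha i)
  rw [hcf] at hval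
  simp only at hval
  have hq0 : (q : ℚ) ≠ 0 := by exact_mod_cast hq.ne'
  have hr1Q : ((seqR c n 1 : ℤ) : ℚ) ≠ 0 := by exact_mod_cast hr1pos.ne'
  have hcross : p * seqR c n 1 = seqR c n 0 * q := by
    have h := (hhj.symm.trans hval)
    rw [div_eq_div_iff hq0 hr1Q] at h
    exact_mod_cast h
  have hcpq : IsCoprime q p := (Int.isCoprime_iff_gcd_eq_one.mpr hcop).symm
  have hcr : IsCoprime (seqR c n 1) (seqR c n 0) := (seqR_gcd c n).symm
  have hq_eq : q = seqR c n 1 := by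
    have d1 : q ∣ seqR c n 1 := by
      refine hcpq.dvd_of_dvd_mul_right ?_
      rw [show seqR c n 1 * p = p * seqR c n 1 from mul_comm _ _, hcross]
      exact Dvd.intro_left _ rfl
    have d2 : seqR c n 1 ∣ q := by
      refine hcr.dvd_of_dvd_mul_right ?_
      rw [show q * seqR c n 0 = seqR c n 0 * q from mul_comm _ _, ← hcross]
      exact Dvd.intro_left _ rfl
    exact Int.dvd_antisymm hq.le hr1pos.le d1 d2
  have hp_eq : p = seqR c n 0 := by
    have := hcross
    rw [← hq_eq] at this
    exact mul_right_cancel₀ (by exact_mod_cast hq.ne') (by linarith [this] )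
  have hPQ : ((seqR c n 0 : ℤ) : ℚ) ≠ 0 := by exact_mod_cast hr0pos.ne'
  -- matrix computations
  set x : Fin n → ℚ := fun i => yF c n (↑i + 1) with hx_def
  have hAx : (tridiag a).mulVec x = fun i => (a i : ℚ) - 2 := by
    funext i
    show ∑ j, tridiag a i j * yF c n (↑j + 1) = (a i : ℚ) - 2
    rw [rowsum a i (yF c n) (yF_zero c n hPQ) (yF_top c n hPQ), ← hca i]
    exact yF_id c n hPQ i.isLt
  set B : Matrix (Fin n) (Fin n) ℚ := Matrix.of (fun i k => betaF c n ↑k (↑i + 1)) with hB_def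
  have hAB : tridiag a * B = 1 := by
    ext i k
    rw [Matrix.mul_apply]
    show ∑ j, tridiag a i j * betaF c n ↑k (↑j + 1) = _
    rw [rowsum a i (betaF c n ↑k) (betaF_zero c n ↑k) (betaF_top c n ↑k k.isLt), ← hca i,
      betaF_id c n ↑k k.isLt hPQ i.isLt]
    simp [Matrix.one_apply, Fin.ext_iff]
  have hBA : B * tridiag a = 1 := mul_eq_one_comm.mp hAB
  have hfin : (tridiag a)⁻¹.mulVec (fun i => (a i : ℚ) - 2) = x := by
    rw [Matrix.inv_eq_right_inv hAB, ← hAx, Matrix.mulVec_mulVec, hBA, Matrix.one_mulVec]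
  rw [hfin]
  show yF c n (0 + 1) = ((q : ℚ) + 1 - p) / p
  rw [yF]
  have hs1 : seqS c (0 + 1) = 1 := rfl
  rw [hs1, show (0 + 1 : ℕ) = 1 from rfl, ← hq_eq, ← hp_eq]
  have hpQ : (p : ℚ) ≠ 0 := by
    have : (0:ℤ) < p := lt_trans hq hqp
    exact_mod_cast this.ne'
  push_cast
  field_simp
  ring
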